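/- Let E be a finite-dimensional real inner product space, and let φ : E → ℝ be differentiable, strictly convex, and supercoercive (φ(x)/‖x‖ → ∞ as ‖x‖ → ∞). Then the gradient map ∇φ : E → E is a bijection, and for every y ∈ E the unique point x with ∇φ(x) = y is the unique maximizer of x ↦ ⟨y, x⟩ − φ(x) over E. -/

import Mathlib

open scoped RealInnerProductSpace
open Filter

section Aux

variable {E : Type*} [NormedAddCommGroup E] [InnerProductSpace ℝ E] [CompleteSpace E]

private lemma toDual_grad_eq {φ : E → ℝ} (hdiff : Differentiable ℝ φ) (x : E) :
    HasFDerivAt φ (InnerProductSpace.toDual ℝ E (gradient φ x)) x :=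
  (hdiff x).hasGradientAt.hasFDerivAt

/-- non-strict gradient inequality for convex differentiable functions -/
private lemma grad_ineq {φ : E → ℝ} (hdiff : Differentiable ℝ φ)
    (hconv : ConvexOn ℝ Set.univ φ) (x z : E) :
    ⟪gradient φ x, z - x⟫ ≤ φ z - φ x := by
  set d := z - x with hd
  set g : ℝ → ℝ := fun t => φ (x + t • d) with hg
  have hgL : g = φ ∘ (AffineMap.lineMap x z : ℝ →ᵃ[ℝ] E) := by
    funext t
    simp only [hg, Function.comp, AffineMap.lineMap_apply, hd]
    congr 1
    simp [vsub_eq_sub, vadd_eq_add]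
    abel
  have hgconv : ConvexOn ℝ Set.univ g := by
    rw [hgL]
    have := hconv.comp_affineMap (AffineMap.lineMap x z : ℝ →ᵃ[ℝ] E)
    simpa using this
  have hderiv : ∀ t : ℝ, HasDerivAt g ⟪gradient φ (x + t • d), d⟫ t := by
    intro t
    have h1 : HasDerivAt (fun t : ℝ => x + t • d) d t := by
      simpa using ((hasDerivAt_id t).smul_const d).const_add x
    have h2 := (toDual_grad_eq hdiff (x + t • d)).comp_hasDerivAt t h1
    simpa [hg, InnerProductSpace.toDual_apply_apply, Function.comp_def] using h2
  have key := hgconv.le_slope_of_hasDerivAt (Set.mem_univ (0:ℝ)) (Set.mem_univ (1:ℝ))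
    one_pos (hderiv 0)
  rw [slope_def_field] at key
  have hg0 : g 0 = φ x := by simp [hg]
  have hg1 : g 1 = φ z := by simp [hg, hd]
  have h0 : (0:ℝ) • d = 0 := zero_smul ℝ d
  calc ⟪gradient φ x, z - x⟫ = ⟪gradient φ (x + (0:ℝ) • d), d⟫ := by rw [h0, add_zero, hd]
    _ ≤ (g 1 - g 0) / (1 - 0) := key
    _ = φ z - φ x := by rw [hg0, hg1]; ring

/-- strict gradient inequality for strictly convex differentiable functions -/
private lemma grad_strict_ineq {φ : E → ℝ} (hdiff : Differentiable ℝ φ)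
    (hconv : StrictConvexOn ℝ Set.univ φ) {x z : E} (hxz : x ≠ z) :
    ⟪gradient φ x, z - x⟫ < φ z - φ x := by
  set m : E := (2⁻¹ : ℝ) • x + (2⁻¹ : ℝ) • z with hm
  have hmid : φ m < (2⁻¹ : ℝ) * φ x + (2⁻¹ : ℝ) * φ z := by
    have := hconv.2 (Set.mem_univ x) (Set.mem_univ z) hxz
      (by norm_num : (0:ℝ) < 2⁻¹) (by norm_num : (0:ℝ) < 2⁻¹) (by norm_num)
    simpa [smul_eq_mul] using this
  have h1 : ⟪gradient φ x, m - x⟫ ≤ φ m - φ x := grad_ineq hdiff hconv.convexOn x m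
  have hmx : m - x = (2⁻¹ : ℝ) • (z - x) := by
    rw [hm]; rw [smul_sub]; module
  rw [hmx, real_inner_smul_right] at h1
  nlinarith [h1, hmid]

end Aux

/-- **Legendre duality: bijectivity of the gradient map.**
For a differentiable, strictly convex and supercoercive potential `φ` on a
finite-dimensional real inner product space, the gradient map `∇φ : E → E` is a
bijection, and for every `y` the unique `x` with `∇φ x = y` is the unique maximizer of
`x ↦ ⟪y, x⟫ - φ x`. -/
theorem gradient_bijective_and_maximizer
    {E : Type*} [NormedAddCommGroup E] [InnerProductSpace ℝ E] [FiniteDimensional ℝ E]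
    (φ : E → ℝ) (hdiff : Differentiable ℝ φ)
    (hconv : StrictConvexOn ℝ Set.univ φ)
    (hcoer : Filter.Tendsto (fun x => φ x / ‖x‖) (Filter.cocompact E) Filter.atTop) :
    Function.Bijective (gradient φ) ∧
      ∀ y x : E, gradient φ x = y →
        ∀ x' : E, x' ≠ x → ⟪y, x'⟫ - φ x' < ⟪y, x⟫ - φ x := by
  -- injectivity from strict monotonicity of the gradient
  have hinj : Function.Injective (gradient φ) := by
    intro a b hab
    by_contra hne
    have h1 := grad_strict_ineq hdiff hconv (hne : a ≠ b)
    have h2 := grad_strict_ineq hdiff hconv (Ne.symm hne : b ≠ a)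
    rw [hab] at h1
    have : ⟪gradient φ b, a - b⟫ = - ⟪gradient φ b, b - a⟫ := by
      rw [← inner_neg_right]; congr 1; abel
    linarith [h1, h2, this ▸ h2]
  -- surjectivity via minimization of x ↦ φ x - ⟪y, x⟫
  have hsurj : Function.Surjective (gradient φ) := by
    intro y
    set f : E → ℝ := fun x => φ x - ⟪y, x⟫ with hf
    have hfc : Continuous f := by
      exact hdiff.continuous.sub ((innerSL ℝ y).continuous)
    have hcoer' : Tendsto f (cocompact E) atTop := by
      have h1 : Tendsto (fun x : E => ‖x‖ * (φ x / ‖x‖ - ‖y‖)) (cocompact E) atTop :=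
        Tendsto.atTop_mul_atTop₀ tendsto_norm_cocompact_atTop
          (hcoer.atTop_add tendsto_const_nhds)
      refine tendsto_atTop_mono' _ ?_ h1
      filter_upwards [tendsto_norm_cocompact_atTop.eventually_ge_atTop 1] with x hx
      have hxpos : (0:ℝ) < ‖x‖ := lt_of_lt_of_le one_pos hx
      have : ‖x‖ * (φ x / ‖x‖ - ‖y‖) = φ x - ‖y‖ * ‖x‖ := by
        field_simp
      rw [this]
      have := real_inner_le_norm y x
      simp only [hf]
      linarith
    obtain ⟨x₀, hx₀⟩ := hfc.exists_forall_le hcoer'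
    refine ⟨x₀, ?_⟩
    -- at the minimum the derivative vanishes
    have hmin : IsLocalMin f x₀ := Filter.Eventually.of_forall hx₀
    have hfd : HasFDerivAt f
        (InnerProductSpace.toDual ℝ E (gradient φ x₀) - InnerProductSpace.toDual ℝ E y) x₀ := by
      have h1 := toDual_grad_eq hdiff x₀
      have h2 : HasFDerivAt (fun x : E => ⟪y, x⟫) (InnerProductSpace.toDual ℝ E y) x₀ := by
        have : (InnerProductSpace.toDual ℝ E y : E →L[ℝ] ℝ) = innerSL ℝ y := by
          ext v; simp [InnerProductSpace.toDual_apply_apply]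
        rw [this]
        exact (innerSL ℝ y).hasFDerivAt
      exact h1.sub h2
    have hzero : fderiv ℝ f x₀ = 0 := hmin.fderiv_eq_zero
    rw [hfd.fderiv] at hzero
    have : InnerProductSpace.toDual ℝ E (gradient φ x₀ - y) = 0 := by
      rw [map_sub]; exact hzero
    have h3 : gradient φ x₀ - y = 0 :=
      (LinearIsometryEquiv.map_eq_zero_iff _).mp this
    exact sub_eq_zero.mp h3
  refine ⟨⟨hinj, hsurj⟩, ?_⟩
  intro y x hx x' hx'
  have := grad_strict_ineq hdiff hconv (Ne.symm hx' : x ≠ x')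
  rw [hx] at this
  have hiy : ⟪y, x' - x⟫ = ⟪y, x'⟫ - ⟪y, x⟫ := inner_sub_right y x' x
  linarith [this, hiy ▸ this]
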